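/- Let Z_m = {z_1,...,z_m} with m even and F a finite set of functions Z_m → ℝ. Then the permutational Rademacher complexity satisfies Q_{m,m/2}(F, Z_m) ≤ (1 + 2/(√(2πm) − 2)) · R_m(F, Z_m), where R_m(F, Z_m) = E_ε[sup_{f∈F} (2/m) Σ_{i=1}^m ε_i f(z_i)] is the conditional Rademacher complexity with i.i.d. uniform ±1 signs ε_i. -/

import Mathlib

open Finset Filter
open scoped Classical


/-- Average of `f` over a finite set. -/
noncomputable def favg {α : Type*} (f : α → ℝ) (S : Finset α) : ℝ :=
  (∑ x ∈ S, f x) / S.card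

/-- Real-valued sign of a Boolean sign: `+1` for `true`, `−1` for `false`. -/
def bsgn (b : Bool) : ℝ := if b then 1 else -1

/-- Permutational Rademacher complexity of a finite nonempty class `F` of
functions on the `m`-point set `Fin m`, with split parameter `n`. -/
noncomputable def PRCu {m : ℕ} (F : Finset (Fin m → ℝ)) (hF : F.Nonempty)
    (n : ℕ) : ℝ :=
  (1 / (m.choose n : ℝ)) *
    ∑ S ∈ (Finset.univ : Finset (Fin m)).powersetCard n,
      F.sup' hF fun f => favg f (Finset.univ \ S) - favg f S

/-- Conditional Rademacher complexity of a finite nonempty class `F` of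
functions on `Fin m`. -/
noncomputable def Rad {m : ℕ} (F : Finset (Fin m → ℝ)) (hF : F.Nonempty) : ℝ :=
  (∑ ε : Fin m → Bool,
      F.sup' hF fun f => (2 / (m : ℝ)) * ∑ i, bsgn (ε i) * f i) / 2 ^ m


namespace PRCaux



lemma N1 (n : ℕ) : 2 * ∑ k ∈ range (n+1), (2*n).choose k = 4^n + (2*n).choose n := by
  have h4 : ∑ k ∈ range (2*n+1), (2*n).choose k = 4^n := by
    rw [Nat.sum_range_choose, pow_mul]
    norm_num
  have hsplit : ∑ k ∈ range (2*n+1), (2*n).choose k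
      = (∑ k ∈ range (n+1), (2*n).choose k) + ∑ k ∈ Finset.Ico (n+1) (2*n+1), (2*n).choose k := by
    rw [Finset.range_eq_Ico,
      ← Finset.sum_Ico_consecutive (fun k => (2*n).choose k) (Nat.zero_le (n+1))
        (show n+1 ≤ 2*n+1 by omega)]
    rw [Finset.range_eq_Ico]
  have hrefl : ∑ k ∈ Finset.Ico (n+1) (2*n+1), (2*n).choose k
      = ∑ k ∈ range n, (2*n).choose k := by
    apply Finset.sum_nbij' (fun k => 2*n - k) (fun k => 2*n - k)
    · intro a ha
      simp only [Finset.mem_Ico] at ha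
      simp only [Finset.mem_range]
      omega
    · intro a ha
      simp only [Finset.mem_range] at ha
      simp only [Finset.mem_Ico]
      omega
    · intro a ha
      simp only [Finset.mem_Ico] at ha
      omega
    · intro a ha
      simp only [Finset.mem_range] at ha
      omega
    · intro a ha
      simp only [Finset.mem_Ico] at ha
      exact (Nat.choose_symm (show a ≤ 2*n by omega)).symm
  have hlast : ∑ k ∈ range (n+1), (2*n).choose k
      = (∑ k ∈ range n, (2*n).choose k) + (2*n).choose n := by
    rw [Finset.sum_range_succ]
  omega

lemma N2 (n : ℕ) : ∑ k ∈ range (n+1), ((n:ℝ) - k) * ((2*n).choose k : ℝ)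
    = n * ((2*n).choose n : ℝ) / 2 := by
  have tele : ∑ k ∈ range n, (((k+1 : ℕ):ℝ) * ((2*n).choose (k+1) : ℝ)
      - (k:ℝ) * ((2*n).choose k : ℝ)) = (n:ℝ) * ((2*n).choose n : ℝ) := by
    rw [Finset.sum_range_sub (fun k => (k:ℝ) * ((2*n).choose k : ℝ))]
    simp
  have step : ∀ k ∈ range n, ((n:ℝ) - k) * ((2*n).choose k : ℝ)
      = (((k+1:ℕ):ℝ) * ((2*n).choose (k+1) : ℝ) - (k:ℝ) * ((2*n).choose k : ℝ)) / 2 := by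
    intro k hk
    rw [Finset.mem_range] at hk
    have h := Nat.choose_succ_right_eq (2*n) k
    have hsub : ((2*n - k : ℕ):ℝ) = 2*(n:ℝ) - k := by
      have hk2 : k ≤ 2*n := by omega
      push_cast [hk2]
      ring
    have hc : ((2*n).choose (k+1) : ℝ) * ((k:ℝ)+1)
        = ((2*n).choose k : ℝ) * ((2*n - k : ℕ) : ℝ) := by
      exact_mod_cast h
    rw [hsub] at hc
    push_cast
    linear_combination -hc/2
  rw [Finset.sum_range_succ]
  rw [Finset.sum_congr rfl step]
  rw [← Finset.sum_div, tele]
  simp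

lemma N0 {n j : ℕ} (hj : j ≤ n) :
    (2*n).choose n * n.choose j = (2*n).choose (n - j) * (n+j).choose j := by
  have h1 : n.choose j * j.factorial * (n-j).factorial = n.factorial :=
    Nat.choose_mul_factorial_mul_factorial hj
  have h2 : (n+j).choose j * j.factorial * n.factorial = (n+j).factorial := by
    have := Nat.choose_mul_factorial_mul_factorial (Nat.le_add_left j n)
    rwa [show n + j - j = n by omega] at this
  have h3 : (2*n).choose n * n.factorial * n.factorial = (2*n).factorial := by
    have := Nat.choose_mul_factorial_mul_factorial (show n ≤ 2*n by omega)
    rwa [show 2*n - n = n by omega] at this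
  have h4 : (2*n).choose (n-j) * (n-j).factorial * (n+j).factorial = (2*n).factorial := by
    have := Nat.choose_mul_factorial_mul_factorial (show n - j ≤ 2*n by omega)
    rwa [show 2*n - (n-j) = n+j by omega] at this
  have key : ((2*n).choose n * n.choose j) * (j.factorial * (n-j).factorial * n.factorial)
      = ((2*n).choose (n-j) * (n+j).choose j) * (j.factorial * (n-j).factorial * n.factorial) := by
    calc ((2*n).choose n * n.choose j) * (j.factorial * (n-j).factorial * n.factorial)
        = (2*n).choose n * (n.choose j * j.factorial * (n-j).factorial) * n.factorial := by ring
      _ = (2*n).choose n * n.factorial * n.factorial := by rw [h1]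
      _ = (2*n).factorial := h3
      _ = (2*n).choose (n-j) * (n-j).factorial * (n+j).factorial := h4.symm
      _ = (2*n).choose (n-j) * (n-j).factorial * ((n+j).choose j * j.factorial * n.factorial) := by
          rw [h2]
      _ = ((2*n).choose (n-j) * (n+j).choose j) * (j.factorial * (n-j).factorial * n.factorial) := by
          ring
  exact Nat.eq_of_mul_eq_mul_right (by positivity) key

lemma term_eq {n j : ℕ} (hj : j ≤ n) :
    (n.choose j : ℝ) / ((n+j).choose j : ℝ)
      = ((2*n).choose (n-j) : ℝ) / ((2*n).choose n : ℝ) := by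
  have h0 := N0 hj
  have hc1 : (0:ℝ) < ((n+j).choose j : ℝ) := by
    exact_mod_cast Nat.choose_pos (Nat.le_add_left j n)
  have hc2 : (0:ℝ) < ((2*n).choose n : ℝ) := by
    exact_mod_cast Nat.choose_pos (show n ≤ 2*n by omega)
  rw [div_eq_div_iff hc1.ne' hc2.ne']
  have := congrArg (fun x : ℕ => (x:ℝ)) h0
  push_cast at this
  linarith [this]

lemma R1 (n : ℕ) : ∑ j ∈ range (n+1), (n.choose j : ℝ) / ((n+j).choose j : ℝ)
    = ((4:ℝ)^n + ((2*n).choose n : ℝ)) / (2 * ((2*n).choose n : ℝ)) := by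
  have h : ∑ j ∈ range (n+1), (n.choose j : ℝ) / ((n+j).choose j : ℝ)
      = (∑ j ∈ range (n+1), ((2*n).choose (n-j) : ℝ)) / ((2*n).choose n : ℝ) := by
    rw [Finset.sum_div]
    apply Finset.sum_congr rfl
    intro j hj
    rw [Finset.mem_range] at hj
    exact term_eq (by omega)
  rw [h]
  have hrefl : ∑ j ∈ range (n+1), (((2*n).choose (n-j) : ℕ) : ℝ)
      = ∑ j ∈ range (n+1), (((2*n).choose j : ℕ) : ℝ) := by
    have := Finset.sum_range_reflect (fun j => (((2*n).choose j : ℕ) : ℝ)) (n+1)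
    simpa using this
  rw [hrefl]
  have hN1 := N1 n
  have : (2:ℝ) * ∑ j ∈ range (n+1), (((2*n).choose j : ℕ) : ℝ)
      = (4:ℝ)^n + ((2*n).choose n : ℝ) := by
    exact_mod_cast congrArg (fun x : ℕ => (x:ℝ)) hN1
  have hc2 : (0:ℝ) < ((2*n).choose n : ℝ) := by
    exact_mod_cast Nat.choose_pos (show n ≤ 2*n by omega)
  rw [div_eq_div_iff hc2.ne' (by positivity)]
  linear_combination (((2*n).choose n : ℝ)) * this

lemma R2 (n : ℕ) : ∑ j ∈ range (n+1), (j:ℝ) * (n.choose j : ℝ) / ((n+j).choose j : ℝ)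
    = (n:ℝ) / 2 := by
  have hc2 : (0:ℝ) < ((2*n).choose n : ℝ) := by
    exact_mod_cast Nat.choose_pos (show n ≤ 2*n by omega)
  have h : ∑ j ∈ range (n+1), (j:ℝ) * (n.choose j : ℝ) / ((n+j).choose j : ℝ)
      = (∑ j ∈ range (n+1), (j:ℝ) * ((2*n).choose (n-j) : ℝ)) / ((2*n).choose n : ℝ) := by
    rw [Finset.sum_div]
    apply Finset.sum_congr rfl
    intro j hj
    rw [Finset.mem_range] at hj
    rw [mul_div_assoc, term_eq (by omega), mul_div_assoc]
  rw [h]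
  have hrefl : ∑ j ∈ range (n+1), (j:ℝ) * ((2*n).choose (n-j) : ℝ)
      = ∑ k ∈ range (n+1), ((n:ℝ) - k) * ((2*n).choose k : ℝ) := by
    have := Finset.sum_range_reflect (fun k => ((n:ℝ) - k) * ((2*n).choose k : ℝ)) (n+1)
    rw [← this]
    apply Finset.sum_congr rfl
    intro j hj
    rw [Finset.mem_range] at hj
    have hj' : j ≤ n := by omega
    have h1 : n + 1 - 1 - j = n - j := by omega
    rw [h1]
    have h2 : ((n - j : ℕ):ℝ) = (n:ℝ) - j := by
      push_cast [hj']
      ring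
    rw [h2]
    ring_nf
  rw [hrefl, N2]
  field_simp




noncomputable def bseq (k : ℕ) : ℝ := ((Nat.centralBinom k : ℝ))^2 * k / 16^k

lemma bseq_mono : Monotone bseq := by
  apply monotone_nat_of_le_succ
  intro k
  have key : ((k:ℝ)+1) * (Nat.centralBinom (k+1) : ℝ)
      = 2*(2*(k:ℝ)+1) * (Nat.centralBinom k : ℝ) := by
    exact_mod_cast Nat.succ_mul_centralBinom_succ k
  have hsq : (((k:ℝ)+1))^2 * ((Nat.centralBinom (k+1) : ℝ))^2
      = 4*(2*(k:ℝ)+1)^2 * ((Nat.centralBinom k : ℝ))^2 := by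
    linear_combination (((k:ℝ)+1) * (Nat.centralBinom (k+1) : ℝ)
      + 2*(2*(k:ℝ)+1) * (Nat.centralBinom k : ℝ)) * key
  unfold bseq
  rw [div_le_div_iff₀ (by positivity) (by positivity)]
  push_cast
  have hq : (16:ℝ)*(k:ℝ)*((k:ℝ)+1) ≤ 4*(2*(k:ℝ)+1)^2 := by nlinarith [sq_nonneg (1:ℝ)]
  apply le_of_mul_le_mul_left _ (show (0:ℝ) < (k:ℝ)+1 by positivity)
  calc ((k:ℝ)+1) * (((Nat.centralBinom k : ℝ))^2*(k:ℝ)*16^(k+1))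
      = (16*(k:ℝ)*((k:ℝ)+1)) * (((Nat.centralBinom k : ℝ))^2*16^k) := by ring
    _ ≤ (4*(2*(k:ℝ)+1)^2) * (((Nat.centralBinom k : ℝ))^2*16^k) := by
        apply mul_le_mul_of_nonneg_right hq (by positivity)
    _ = ((k:ℝ)+1) * (((Nat.centralBinom (k+1) : ℝ))^2*((k:ℝ)+1)*16^k) := by
        linear_combination (-(16:ℝ)^k) * hsq

lemma stirling_ratio (k : ℕ) (hk : 1 ≤ k) :
    Stirling.stirlingSeq (2*k) / (Stirling.stirlingSeq k)^2
      = (Nat.centralBinom k : ℝ) * Real.sqrt k / 4^k := by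
  have hk0 : (0:ℝ) < k := by exact_mod_cast hk
  have hsk : (0:ℝ) < Real.sqrt k := Real.sqrt_pos.2 hk0
  have hkk : Real.sqrt (k:ℝ) ^ 2 = k := Real.sq_sqrt hk0.le
  have he : (0:ℝ) < Real.exp 1 := Real.exp_pos 1
  have hE : (0:ℝ) < ((k:ℝ)/Real.exp 1)^k := by positivity
  have hfac : (0:ℝ) < (k.factorial : ℝ) := by exact_mod_cast k.factorial_pos
  have hF : (Nat.centralBinom k : ℝ) * (k.factorial : ℝ) * (k.factorial : ℝ)
      = ((2*k).factorial : ℝ) := by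
    have h := Nat.choose_mul_factorial_mul_factorial (show k ≤ 2*k by omega)
    rw [show 2*k - k = k by omega] at h
    rw [Nat.centralBinom]
    exact_mod_cast h
  have hs4 : Real.sqrt (2*((2*k:ℕ):ℝ)) = 2 * Real.sqrt k := by
    rw [show (2:ℝ)*((2*k:ℕ):ℝ) = (2:ℝ)^2*(k:ℝ) by push_cast; ring,
      Real.sqrt_mul (by positivity), Real.sqrt_sq (by norm_num)]
  have hp : (((2*k:ℕ):ℝ)/Real.exp 1)^(2*k) = 4^k * (((k:ℝ))/Real.exp 1)^(2*k) := by
    rw [show ((2*k:ℕ):ℝ)/Real.exp 1 = 2*((k:ℝ)/Real.exp 1) by push_cast; ring,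
      mul_pow, show (2:ℝ)^(2*k) = 4^k by rw [pow_mul]; norm_num]
  have hpow2 : (((k:ℝ))/Real.exp 1)^(2*k) = (((k:ℝ)/Real.exp 1)^k)^2 := by
    rw [← pow_mul, mul_comm]
  have hs2 : Real.sqrt (2*(k:ℝ)) ^ 2 = 2*k := Real.sq_sqrt (by positivity)
  have hs2pos : (0:ℝ) < Real.sqrt (2*(k:ℝ)) := Real.sqrt_pos.2 (by linarith)
  unfold Stirling.stirlingSeq
  rw [hs4, hp, hpow2]
  rw [div_pow, ← hF]
  field_simp
  have h2 : Real.sqrt 2 ^ 2 = 2 := Real.sq_sqrt (by norm_num)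
  linear_combination (Nat.centralBinom k : ℝ) * hs2 - 2 * (Nat.centralBinom k : ℝ) * hkk



lemma tendsto_bseq : Filter.Tendsto PRCaux.bseq Filter.atTop (nhds (1/Real.pi)) := by
  have hs := Stirling.tendsto_stirlingSeq_sqrt_pi
  have hdouble : Filter.Tendsto (fun k : ℕ => 2*k) Filter.atTop Filter.atTop :=
    Filter.tendsto_atTop_atTop_of_monotone (fun a b h => by omega) (fun b => ⟨b, by omega⟩)
  have h2 : Filter.Tendsto (fun k => Stirling.stirlingSeq (2*k)) Filter.atTop
      (nhds (Real.sqrt Real.pi)) := hs.comp hdouble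
  have hpisq : (Real.sqrt Real.pi)^2 ≠ 0 := by
    rw [Real.sq_sqrt Real.pi_pos.le]
    exact Real.pi_ne_zero
  have hratio : Filter.Tendsto
      (fun k => Stirling.stirlingSeq (2*k) / (Stirling.stirlingSeq k)^2)
      Filter.atTop (nhds (Real.sqrt Real.pi / (Real.sqrt Real.pi)^2)) :=
    h2.div (hs.pow 2) hpisq
  have heq : (fun k => (Stirling.stirlingSeq (2*k) / (Stirling.stirlingSeq k)^2)^2)
      =ᶠ[Filter.atTop] PRCaux.bseq := by
    filter_upwards [Filter.eventually_ge_atTop 1] with k hk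
    rw [stirling_ratio k hk]
    unfold PRCaux.bseq
    rw [div_pow, mul_pow, Real.sq_sqrt (by positivity : (0:ℝ) ≤ (k:ℝ)), ← pow_mul,
      show (4:ℝ)^(k*2) = 16^k by rw [mul_comm k 2, pow_mul]; norm_num]
  have hfinal := (hratio.pow 2).congr' heq
  convert hfinal using 2
  rw [div_pow, ← pow_mul, Real.sq_sqrt Real.pi_pos.le]
  rw [show Real.sqrt Real.pi ^ (2*2) = Real.pi^2 by
    rw [show 2*2 = 2*2 from rfl, pow_mul, Real.sq_sqrt Real.pi_pos.le]]
  field_simp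

lemma CB_bound (n : ℕ) : ((2*n).choose n : ℝ) * Real.sqrt (Real.pi * n) ≤ 4^n := by
  have hb : PRCaux.bseq n ≤ 1/Real.pi := bseq_mono.ge_of_tendsto tendsto_bseq n
  have hpi := Real.pi_pos
  have hkey : ((Nat.centralBinom n : ℝ))^2 * n * Real.pi ≤ 16^n := by
    unfold PRCaux.bseq at hb
    rw [div_le_div_iff₀ (by positivity) hpi] at hb
    calc ((Nat.centralBinom n : ℝ))^2 * n * Real.pi ≤ 1 * 16^n := hb
      _ = 16^n := one_mul _
  have hcb : ((2*n).choose n : ℝ) = (Nat.centralBinom n : ℝ) := by rw [Nat.centralBinom]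
  rw [hcb]
  have hnn : (0:ℝ) ≤ (Nat.centralBinom n : ℝ) := by positivity
  have h1 : ((Nat.centralBinom n : ℝ) * Real.sqrt (Real.pi * n))^2 ≤ ((4:ℝ)^n)^2 := by
    rw [mul_pow, Real.sq_sqrt (by positivity : (0:ℝ) ≤ Real.pi * n),
      show ((4:ℝ)^n)^2 = 16^n by rw [← pow_mul, mul_comm, pow_mul]; norm_num]
    calc ((Nat.centralBinom n : ℝ))^2 * (Real.pi * n)
        = ((Nat.centralBinom n : ℝ))^2 * n * Real.pi := by ring
      _ ≤ 16^n := hkey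
  have hnn2 : (0:ℝ) ≤ (Nat.centralBinom n : ℝ) * Real.sqrt (Real.pi * n) := by positivity
  exact (pow_le_pow_iff_left₀ hnn2 (by positivity) two_ne_zero).mp h1




/-- sign vector of a subset -/
noncomputable def sgn {m : ℕ} (T : Finset (Fin m)) (i : Fin m) : ℝ :=
  if i ∈ T then 1 else -1

/-- weight: inverse binomial -/
noncomputable def wgt (n t : ℕ) : ℝ :=
  (((n + Nat.dist t n).choose (Nat.dist t n) : ℕ) : ℝ)⁻¹

/-- coupling weight matrix -/
noncomputable def Wm {m : ℕ} (n : ℕ) (P T : Finset (Fin m)) : ℝ :=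
  if P ⊆ T ∨ T ⊆ P then wgt n T.card else 0

lemma wgt_nonneg (n t : ℕ) : 0 ≤ wgt n t := by unfold wgt; positivity

lemma Wm_nonneg {m : ℕ} (n : ℕ) (P T : Finset (Fin m)) : 0 ≤ Wm n P T := by
  unfold Wm; split
  · exact wgt_nonneg n T.card
  · exact le_rfl
lemma wgt_add (n j : ℕ) : wgt n (n+j) = (((n+j).choose j : ℕ) : ℝ)⁻¹ := by
  unfold wgt
  congr 2 <;> · rw [show Nat.dist (n+j) n = j from by rw [Nat.dist]; omega]

lemma wgt_sub {n j : ℕ} (hj : j ≤ n) : wgt n (n - j) = (((n+j).choose j : ℕ) : ℝ)⁻¹ := by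
  unfold wgt
  congr 2 <;> · rw [show Nat.dist (n-j) n = j from by rw [Nat.dist]; omega]

lemma wgt_self (n : ℕ) : wgt n n = 1 := by
  have := wgt_add n 0
  simpa using this

lemma rowsum {m n : ℕ} (hm : m = 2*n) (T : Finset (Fin m)) :
    ∑ P ∈ (Finset.univ : Finset (Fin m)).powersetCard n, Wm n P T = 1 := by
  unfold Wm
  rw [← Finset.sum_filter]
  by_cases h : n ≤ T.card
  · have hfil : ((Finset.univ : Finset (Fin m)).powersetCard n).filter
        (fun P => P ⊆ T ∨ T ⊆ P) = T.powersetCard n := by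
      ext P
      simp only [Finset.mem_filter, Finset.mem_powersetCard, Finset.subset_univ, true_and]
      constructor
      · rintro ⟨hc, hPT | hTP⟩
        · exact ⟨hPT, hc⟩
        · have : T = P := Finset.eq_of_subset_of_card_le hTP (by omega)
          exact ⟨this ▸ Finset.Subset.refl _, hc⟩
      · rintro ⟨hPT, hc⟩
        exact ⟨hc, Or.inl hPT⟩
    rw [hfil, Finset.sum_const, Finset.card_powersetCard]
    have hw : wgt n T.card = ((T.card.choose n : ℕ) : ℝ)⁻¹ := by
      unfold wgt
      rw [show Nat.dist T.card n = T.card - n from by rw [Nat.dist]; omega,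
        show n + (T.card - n) = T.card from by omega, Nat.choose_symm h]
    rw [hw, nsmul_eq_mul, mul_inv_cancel₀]
    have := Nat.choose_pos h
    exact_mod_cast this.ne'
  · push_neg at h
    have hfil : ((Finset.univ : Finset (Fin m)).powersetCard n).filter
        (fun P => P ⊆ T ∨ T ⊆ P) = ((Finset.univ : Finset (Fin m)).powersetCard n).filter
        (fun P => T ⊆ P) := by
      apply Finset.filter_congr
      intro P hP
      rw [Finset.mem_powersetCard] at hP
      obtain ⟨-, hPc⟩ := hP
      constructor
      · rintro (hPT | hTP)
        · have := Finset.card_le_card hPT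
          omega
        · exact hTP
      · exact Or.inr
    rw [hfil]
    have hcount : ∑ P ∈ ((Finset.univ : Finset (Fin m)).powersetCard n).filter
        (fun P => T ⊆ P), wgt n T.card
        = ∑ A ∈ Tᶜ.powersetCard (n - T.card), wgt n T.card := by
      apply Finset.sum_nbij' (fun P => P \ T) (fun A => T ∪ A)
      · intro P hP
        rw [Finset.mem_filter, Finset.mem_powersetCard] at hP
        obtain ⟨⟨-, hc⟩, hTP⟩ := hP
        rw [Finset.mem_powersetCard]
        constructor
        · intro x hx
          rw [Finset.mem_sdiff] at hx
          exact Finset.mem_compl.mpr hx.2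
        · rw [Finset.card_sdiff_of_subset hTP, hc]
      · intro A hA
        rw [Finset.mem_powersetCard] at hA
        obtain ⟨hAc, hc⟩ := hA
        have hdisj : Disjoint T A := by
          rw [Finset.disjoint_left]
          intro x hxT hxA
          have := hAc hxA
          simp at this
          exact this hxT
        rw [Finset.mem_filter, Finset.mem_powersetCard]
        refine ⟨⟨Finset.subset_univ _, ?_⟩, Finset.subset_union_left⟩
        rw [Finset.card_union_of_disjoint hdisj, hc]
        omega
      · intro P hP
        rw [Finset.mem_filter] at hP
        exact Finset.union_sdiff_of_subset hP.2
      · intro A hA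
        rw [Finset.mem_powersetCard] at hA
        apply Finset.union_sdiff_cancel_left
        rw [Finset.disjoint_left]
        intro x hxT hxA
        have := hA.1 hxA
        simp at this
        exact this hxT
      · intros; rfl
    rw [hcount, Finset.sum_const, Finset.card_powersetCard]
    have hTc : Tᶜ.card = 2*n - T.card := by
      rw [Finset.card_compl, Fintype.card_fin]
      omega
    rw [hTc]
    rw [show T.card = n - (n - T.card) by omega, wgt_sub (by omega)]
    rw [show n - (n - (n - T.card)) = n - T.card by omega]
    rw [show n + (n - T.card) = 2*n - (n - (n - T.card)) by omega]
    rw [nsmul_eq_mul]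
    have hpos : 0 < (2*n - (n - (n-T.card))).choose (n - T.card) := by
      apply Nat.choose_pos
      omega
    rw [mul_inv_cancel₀]
    exact_mod_cast hpos.ne'

lemma sum_W_mul {m n : ℕ} {P : Finset (Fin m)} (hP : P.card = n)
    (ψ : Finset (Fin m) → ℝ) :
    ∑ T : Finset (Fin m), Wm n P T * ψ T
      = (∑ A ∈ Pᶜ.powerset, wgt n (n + A.card) * ψ (P ∪ A))
        + ((∑ T ∈ P.powerset, wgt n T.card * ψ T) - ψ P) := by
  have h1 : ∀ T : Finset (Fin m), Wm n P T * ψ T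
      = if (P ⊆ T ∨ T ⊆ P) then wgt n T.card * ψ T else 0 := by
    intro T
    unfold Wm
    split <;> simp
  rw [Finset.sum_congr rfl (fun T _ => h1 T), ← Finset.sum_filter, Finset.filter_or]
  have hunion := Finset.sum_union_inter (s₁ := (Finset.univ : Finset (Finset (Fin m))).filter
      (fun T => P ⊆ T)) (s₂ := (Finset.univ : Finset (Finset (Fin m))).filter (fun T => T ⊆ P))
      (f := fun T => wgt n T.card * ψ T)
  have hinter : ((Finset.univ : Finset (Finset (Fin m))).filter (fun T => P ⊆ T)
      ∩ (Finset.univ : Finset (Finset (Fin m))).filter (fun T => T ⊆ P)) = {P} := by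
    ext Q
    simp only [Finset.mem_inter, Finset.mem_filter, Finset.mem_univ, true_and,
      Finset.mem_singleton]
    constructor
    · rintro ⟨h1, h2⟩
      exact (Finset.Subset.antisymm h2 h1)
    · rintro rfl
      exact ⟨Finset.Subset.refl _, Finset.Subset.refl _⟩
  have hsingle : ∑ T ∈ ({P} : Finset (Finset (Fin m))), wgt n T.card * ψ T = ψ P := by
    rw [Finset.sum_singleton, hP, wgt_self, one_mul]
  have hsup : ∑ T ∈ (Finset.univ : Finset (Finset (Fin m))).filter (fun T => P ⊆ T),
      wgt n T.card * ψ T = ∑ A ∈ Pᶜ.powerset, wgt n (n + A.card) * ψ (P ∪ A) := by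
    apply Finset.sum_nbij' (fun T => T \ P) (fun A => P ∪ A)
    · intro T hT
      rw [Finset.mem_filter] at hT
      rw [Finset.mem_powerset]
      intro x hx
      rw [Finset.mem_sdiff] at hx
      exact Finset.mem_compl.mpr hx.2
    · intro A hA
      rw [Finset.mem_powerset] at hA
      rw [Finset.mem_filter]
      exact ⟨Finset.mem_univ _, Finset.subset_union_left⟩
    · intro T hT
      rw [Finset.mem_filter] at hT
      exact Finset.union_sdiff_of_subset hT.2
    · intro A hA
      rw [Finset.mem_powerset] at hA
      apply Finset.union_sdiff_cancel_left
      rw [Finset.disjoint_left]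
      intro x hxP hxA
      exact Finset.mem_compl.mp (hA hxA) hxP
    · intro T hT
      rw [Finset.mem_filter] at hT
      have hdisj : Disjoint P (T \ P) := Finset.disjoint_sdiff
      have hcard : (P ∪ (T \ P)).card = n + (T \ P).card := by
        rw [Finset.card_union_of_disjoint hdisj, hP]
      rw [Finset.union_sdiff_of_subset hT.2] at hcard
      rw [hcard, Finset.union_sdiff_of_subset hT.2]
  have hsub : ∑ T ∈ (Finset.univ : Finset (Finset (Fin m))).filter (fun T => T ⊆ P),
      wgt n T.card * ψ T = ∑ T ∈ P.powerset, wgt n T.card * ψ T := by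
    apply Finset.sum_congr _ (fun _ _ => rfl)
    ext Q
    simp [Finset.mem_powerset]
  rw [hinter, hsingle, hsup, hsub] at hunion
  linarith [hunion]

lemma powerset_sum_card {α : Type*} (s : Finset α) (φ : ℕ → ℝ) :
    ∑ A ∈ s.powerset, φ A.card = ∑ j ∈ Finset.range (s.card+1), (s.card.choose j : ℝ) * φ j := by
  rw [Finset.sum_powerset_apply_card]
  apply Finset.sum_congr rfl
  intro j _
  rw [nsmul_eq_mul]

/-- the quantity 4^n / centralBinom n -/
noncomputable def qr (n : ℕ) : ℝ := (4:ℝ)^n / (((2*n).choose n : ℕ) : ℝ)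

lemma usum (n : ℕ) : ∑ j ∈ Finset.range (n+1),
    (n.choose j : ℝ) * (((n+j).choose j : ℕ) : ℝ)⁻¹ = (qr n + 1)/2 := by
  have h := R1 n
  have hc2 : (0:ℝ) < ((2*n).choose n : ℝ) := by
    exact_mod_cast Nat.choose_pos (show n ≤ 2*n by omega)
  have hrw : ∑ j ∈ Finset.range (n+1), (n.choose j : ℝ) * (((n+j).choose j : ℕ) : ℝ)⁻¹
      = ∑ j ∈ Finset.range (n+1), (n.choose j : ℝ) / (((n+j).choose j : ℕ) : ℝ) := by
    apply Finset.sum_congr rfl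
    intro j _
    rw [div_eq_mul_inv]
  rw [hrw, h]
  unfold qr
  rw [div_add_one hc2.ne', div_div]
  ring_nf
lemma vsum (n : ℕ) : ∑ j ∈ Finset.range (n+1),
    (j : ℝ) * (n.choose j : ℝ) * (((n+j).choose j : ℕ) : ℝ)⁻¹ = (n:ℝ)/2 := by
  have h := R2 n
  rw [← h]
  apply Finset.sum_congr rfl
  intro j _
  rw [mul_div_assoc, div_eq_mul_inv, mul_assoc]


lemma subset_side_sum {m n : ℕ} {P : Finset (Fin m)} (hP : P.card = n) (φ : ℕ → ℝ) :
    ∑ T ∈ P.powerset, wgt n T.card * φ T.card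
      = ∑ j ∈ Finset.range (n+1),
          (n.choose j : ℝ) * (((n+j).choose j : ℕ):ℝ)⁻¹ * φ (n - j) := by
  rw [powerset_sum_card P (fun t => wgt n t * φ t), hP]
  rw [← Finset.sum_range_reflect
    (fun t => (n.choose t : ℝ) * (wgt n t * φ t)) (n+1)]
  apply Finset.sum_congr rfl
  intro j hj
  rw [Finset.mem_range] at hj
  have hj' : j ≤ n := by omega
  rw [show n + 1 - 1 - j = n - j by omega]
  rw [Nat.choose_symm hj', wgt_sub hj']
  ring

lemma compl_card {m n : ℕ} {P : Finset (Fin m)} (hm : m = 2*n) (hP : P.card = n) :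
    Pᶜ.card = n := by
  rw [Finset.card_compl, Fintype.card_fin, hP]
  omega

lemma sup_side_sum {m n : ℕ} {P : Finset (Fin m)} (hm : m = 2*n) (hP : P.card = n)
    (φ : ℕ → ℝ) :
    ∑ A ∈ Pᶜ.powerset, wgt n (n + A.card) * φ A.card
      = ∑ j ∈ Finset.range (n+1),
          (n.choose j : ℝ) * (((n+j).choose j : ℕ):ℝ)⁻¹ * φ j := by
  rw [powerset_sum_card Pᶜ (fun t => wgt n (n+t) * φ t), compl_card hm hP]
  apply Finset.sum_congr rfl
  intro j _
  rw [wgt_add]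
  ring

lemma computeA {m n : ℕ} {P : Finset (Fin m)} (hm : m = 2*n) (hP : P.card = n) :
    ∑ T : Finset (Fin m), Wm n P T * (2*((T ∩ P).card : ℝ) - n) = n * (qr n - 1) := by
  rw [sum_W_mul hP]
  have hsup : ∑ A ∈ Pᶜ.powerset, wgt n (n + A.card) * (2*(((P ∪ A) ∩ P).card : ℝ) - n)
      = (n:ℝ) * ((qr n + 1)/2) := by
    have hc : ∀ A ∈ Pᶜ.powerset, wgt n (n + A.card) * (2*(((P ∪ A) ∩ P).card : ℝ) - n)
        = wgt n (n + A.card) * (n:ℝ) := by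
      intro A _
      rw [Finset.union_inter_cancel_left, hP]
      push_cast
      ring
    rw [Finset.sum_congr rfl hc, sup_side_sum hm hP (fun _ => (n:ℝ))]
    have hterm : ∀ j ∈ Finset.range (n+1),
        (n.choose j : ℝ) * (((n+j).choose j : ℕ):ℝ)⁻¹ * (n:ℝ)
          = (n:ℝ) * ((n.choose j : ℝ) * (((n+j).choose j : ℕ):ℝ)⁻¹) := by
      intro j _
      ring
    rw [Finset.sum_congr rfl hterm, ← Finset.mul_sum, usum]
  have hsub : ∑ T ∈ P.powerset, wgt n T.card * (2*((T ∩ P).card : ℝ) - n)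
      = (n:ℝ) * ((qr n + 1)/2) - (n:ℝ) := by
    have hc : ∀ T ∈ P.powerset, wgt n T.card * (2*((T ∩ P).card : ℝ) - n)
        = wgt n T.card * (2*(T.card : ℝ) - n) := by
      intro T hT
      rw [Finset.mem_powerset] at hT
      rw [Finset.inter_eq_left.mpr hT]
    rw [Finset.sum_congr rfl hc,
      subset_side_sum hP (fun t => 2*(t : ℝ) - n)]
    have hterm : ∀ j ∈ Finset.range (n+1),
        (n.choose j : ℝ) * (((n+j).choose j : ℕ):ℝ)⁻¹ * (2*((n - j : ℕ) : ℝ) - n)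
          = (n:ℝ) * ((n.choose j : ℝ) * (((n+j).choose j : ℕ):ℝ)⁻¹)
            - 2 * ((j : ℝ) * (n.choose j : ℝ) * (((n+j).choose j : ℕ):ℝ)⁻¹) := by
      intro j hj
      rw [Finset.mem_range] at hj
      rw [show ((n - j : ℕ) : ℝ) = (n:ℝ) - j from by
        have : j ≤ n := by omega
        push_cast [this]
        ring]
      ring
    rw [Finset.sum_congr rfl hterm, Finset.sum_sub_distrib, ← Finset.mul_sum, usum,
      ← Finset.mul_sum, vsum]
    ring
  have hP2 : 2*((P ∩ P).card : ℝ) - n = (n:ℝ) := by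
    rw [Finset.inter_self, hP]
    push_cast
    ring
  rw [hsup, hsub, hP2]
  ring

lemma computeB {m n : ℕ} {P : Finset (Fin m)} (hm : m = 2*n) (hP : P.card = n) :
    ∑ T : Finset (Fin m), Wm n P T * (2*((T ∩ Pᶜ).card : ℝ) - n) = -(n * (qr n - 1)) := by
  rw [sum_W_mul hP]
  have hsup : ∑ A ∈ Pᶜ.powerset, wgt n (n + A.card) * (2*(((P ∪ A) ∩ Pᶜ).card : ℝ) - n)
      = (n:ℝ) - (n:ℝ) * ((qr n + 1)/2) := by
    have hc : ∀ A ∈ Pᶜ.powerset, wgt n (n + A.card) * (2*(((P ∪ A) ∩ Pᶜ).card : ℝ) - n)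
        = wgt n (n + A.card) * (2*(A.card : ℝ) - n) := by
      intro A hA
      rw [Finset.mem_powerset] at hA
      rw [show (P ∪ A) ∩ Pᶜ = A from by
        rw [Finset.union_inter_distrib_right, Finset.inter_compl,
          Finset.inter_eq_left.mpr hA, Finset.empty_union]]
    rw [Finset.sum_congr rfl hc, sup_side_sum hm hP (fun t => 2*(t:ℝ) - n)]
    have hterm : ∀ j ∈ Finset.range (n+1),
        (n.choose j : ℝ) * (((n+j).choose j : ℕ):ℝ)⁻¹ * (2*(j : ℝ) - n)
          = 2 * ((j : ℝ) * (n.choose j : ℝ) * (((n+j).choose j : ℕ):ℝ)⁻¹)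
            - (n:ℝ) * ((n.choose j : ℝ) * (((n+j).choose j : ℕ):ℝ)⁻¹) := by
      intro j _
      ring
    rw [Finset.sum_congr rfl hterm, Finset.sum_sub_distrib, ← Finset.mul_sum,
      ← Finset.mul_sum, vsum, usum]
    ring
  have hsub : ∑ T ∈ P.powerset, wgt n T.card * (2*((T ∩ Pᶜ).card : ℝ) - n)
      = -((n:ℝ) * ((qr n + 1)/2)) := by
    have hc : ∀ T ∈ P.powerset, wgt n T.card * (2*((T ∩ Pᶜ).card : ℝ) - n)
        = wgt n T.card * (-(n:ℝ)) := by
      intro T hT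
      rw [Finset.mem_powerset] at hT
      rw [show T ∩ Pᶜ = ∅ from by
        rw [← Finset.disjoint_iff_inter_eq_empty, Finset.disjoint_left]
        intro x hxT hxc
        exact (Finset.mem_compl.mp hxc) (hT hxT)]
      simp
    rw [Finset.sum_congr rfl hc, subset_side_sum hP (fun _ => -(n:ℝ))]
    have hterm : ∀ j ∈ Finset.range (n+1),
        (n.choose j : ℝ) * (((n+j).choose j : ℕ):ℝ)⁻¹ * (-(n:ℝ))
          = -((n:ℝ) * ((n.choose j : ℝ) * (((n+j).choose j : ℕ):ℝ)⁻¹)) := by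
      intro j _
      ring
    rw [Finset.sum_congr rfl hterm, Finset.sum_neg_distrib, ← Finset.mul_sum, usum]
  have hP2 : 2*((P ∩ Pᶜ).card : ℝ) - n = -(n:ℝ) := by
    rw [Finset.inter_compl]
    simp
  rw [hsup, hsub, hP2]
  ring

lemma sgn_sum_inter {m : ℕ} (S T : Finset (Fin m)) :
    ∑ i ∈ S, sgn T i = 2*((S ∩ T).card : ℝ) - S.card := by
  have hsplit := Finset.sum_filter_add_sum_filter_not S (fun i => i ∈ T) (sgn T)
  have h1 : S.filter (fun i => i ∈ T) = S ∩ T := by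
    ext x
    simp [Finset.mem_inter, Finset.mem_filter]
  have h2 : ∑ i ∈ S.filter (fun i => i ∈ T), sgn T i = ((S ∩ T).card : ℝ) := by
    rw [Finset.sum_congr h1 (g := fun _ => (1:ℝ)) (fun i hi => by
      unfold sgn
      rw [if_pos (Finset.mem_inter.mp hi).2]), Finset.sum_const, nsmul_eq_mul, mul_one]
  have h3 : ∑ i ∈ S.filter (fun i => ¬ i ∈ T), sgn T i
      = -(((S.filter (fun i => ¬ i ∈ T)).card : ℝ)) := by
    rw [Finset.sum_congr rfl (g := fun _ => (-1:ℝ)) (fun i hi => by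
      unfold sgn
      rw [Finset.mem_filter] at hi
      rw [if_neg hi.2]), Finset.sum_const, nsmul_eq_mul]
    ring
  have hcard := Finset.card_filter_add_card_filter_not (s := S)
    (p := fun i => i ∈ T)
  have hpc : (S.filter (fun i => i ∈ T)).card = (S ∩ T).card := by rw [h1]
  have hnc : (S.filter (fun i => ¬ i ∈ T)).card = S.card - (S ∩ T).card := by omega
  have hle : (S ∩ T).card ≤ S.card := Finset.card_le_card Finset.inter_subset_left
  rw [← hsplit, h2, h3, hnc]
  push_cast [hle]
  ring

lemma map_swap_self {m : ℕ} {P : Finset (Fin m)} {i i' : Fin m} (h : i ∈ P ↔ i' ∈ P) :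
    P.map (Equiv.swap i i').toEmbedding = P := by
  ext x
  rw [Finset.mem_map_equiv, Equiv.symm_swap]
  rcases eq_or_ne x i with rfl | hxi
  · rw [Equiv.swap_apply_left]
    exact (h.symm)
  rcases eq_or_ne x i' with rfl | hxi'
  · rw [Equiv.swap_apply_right]
    exact h
  · rw [Equiv.swap_apply_of_ne_of_ne hxi hxi']

lemma colsum_const {m n : ℕ} {P : Finset (Fin m)} {i i' : Fin m} (h : i ∈ P ↔ i' ∈ P) :
    ∑ T : Finset (Fin m), Wm n P T * sgn T i
      = ∑ T : Finset (Fin m), Wm n P T * sgn T i' := by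
  apply Fintype.sum_equiv (Equiv.finsetCongr (Equiv.swap i i'))
  intro T
  show Wm n P T * sgn T i = Wm n P (T.map (Equiv.swap i i').toEmbedding)
      * sgn (T.map (Equiv.swap i i').toEmbedding) i'
  have hmem : i' ∈ T.map (Equiv.swap i i').toEmbedding ↔ i ∈ T := by
    rw [Finset.mem_map_equiv, Equiv.symm_swap, Equiv.swap_apply_right]
  have hsgn : sgn (T.map (Equiv.swap i i').toEmbedding) i' = sgn T i := by
    unfold sgn
    by_cases hiT : i ∈ T
    · rw [if_pos hiT, if_pos (hmem.mpr hiT)]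
    · rw [if_neg hiT, if_neg (fun hx => hiT (hmem.mp hx))]
  have hPmap : P.map (Equiv.swap i i').toEmbedding = P := map_swap_self h
  have hsub1 : P ⊆ T.map (Equiv.swap i i').toEmbedding ↔ P ⊆ T := by
    conv_lhs => rw [← hPmap]
    exact Finset.map_subset_map
  have hsub2 : T.map (Equiv.swap i i').toEmbedding ⊆ P ↔ T ⊆ P := by
    conv_lhs => rw [← hPmap]
    exact Finset.map_subset_map
  have hW : Wm n P (T.map (Equiv.swap i i').toEmbedding) = Wm n P T := by
    unfold Wm
    rw [Finset.card_map]
    by_cases hc : P ⊆ T ∨ T ⊆ P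
    · rw [if_pos hc, if_pos (by rw [hsub1, hsub2]; exact hc)]
    · rw [if_neg hc, if_neg (by rw [hsub1, hsub2]; exact hc)]
  rw [hW, hsgn]

lemma colsum {m n : ℕ} {P : Finset (Fin m)} (hm : m = 2*n) (hn : 1 ≤ n) (hP : P.card = n)
    (i : Fin m) :
    ∑ T : Finset (Fin m), Wm n P T * sgn T i = (qr n - 1) * sgn P i := by
  have hnR : (0:ℝ) < n := by exact_mod_cast hn
  by_cases hi : i ∈ P
  · have hconst : ∀ i' ∈ P, (∑ T : Finset (Fin m), Wm n P T * sgn T i')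
        = ∑ T : Finset (Fin m), Wm n P T * sgn T i := by
      intro i' hi'
      exact colsum_const (iff_of_true hi' hi)
    have hsum : ∑ i' ∈ P, ∑ T : Finset (Fin m), Wm n P T * sgn T i'
        = (n:ℝ) * (∑ T : Finset (Fin m), Wm n P T * sgn T i) := by
      rw [Finset.sum_congr rfl hconst, Finset.sum_const, hP, nsmul_eq_mul]
    have hswap : ∑ i' ∈ P, ∑ T : Finset (Fin m), Wm n P T * sgn T i'
        = ∑ T : Finset (Fin m), Wm n P T * (2*((T ∩ P).card : ℝ) - n) := by
      rw [Finset.sum_comm]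
      apply Finset.sum_congr rfl
      intro T _
      rw [← Finset.mul_sum, sgn_sum_inter, Finset.inter_comm, hP]
    rw [hswap, computeA hm hP] at hsum
    have hsg : sgn P i = 1 := by unfold sgn; rw [if_pos hi]
    rw [hsg, mul_one]
    exact (mul_left_cancel₀ hnR.ne' hsum).symm
  · have hic : i ∈ Pᶜ := Finset.mem_compl.mpr hi
    have hconst : ∀ i' ∈ Pᶜ, (∑ T : Finset (Fin m), Wm n P T * sgn T i')
        = ∑ T : Finset (Fin m), Wm n P T * sgn T i := by
      intro i' hi'
      exact colsum_const (iff_of_false (Finset.mem_compl.mp hi') hi)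
    have hsum : ∑ i' ∈ Pᶜ, ∑ T : Finset (Fin m), Wm n P T * sgn T i'
        = (n:ℝ) * (∑ T : Finset (Fin m), Wm n P T * sgn T i) := by
      rw [Finset.sum_congr rfl hconst, Finset.sum_const, compl_card hm hP, nsmul_eq_mul]
    have hswap : ∑ i' ∈ Pᶜ, ∑ T : Finset (Fin m), Wm n P T * sgn T i'
        = ∑ T : Finset (Fin m), Wm n P T * (2*((T ∩ Pᶜ).card : ℝ) - n) := by
      rw [Finset.sum_comm]
      apply Finset.sum_congr rfl
      intro T _
      rw [← Finset.mul_sum, sgn_sum_inter, Finset.inter_comm, compl_card hm hP]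
    rw [hswap, computeB hm hP] at hsum
    have hsg : sgn P i = -1 := by unfold sgn; rw [if_neg hi]
    rw [hsg]
    have hsum2 : (n:ℝ) * (-(qr n - 1)) = (n:ℝ) * ∑ T : Finset (Fin m), Wm n P T * sgn T i := by
      linarith [hsum]
    have := mul_left_cancel₀ hnR.ne' hsum2
    linarith [this]

noncomputable def H {m : ℕ} (F : Finset (Fin m → ℝ)) (hF : F.Nonempty)
    (T : Finset (Fin m)) : ℝ :=
  F.sup' hF fun f => (2/(m:ℝ)) * ∑ i, sgn T i * f i

lemma keyIneq {m n : ℕ} (F : Finset (Fin m → ℝ)) (hF : F.Nonempty)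
    (hm : m = 2*n) (hn : 1 ≤ n) {P : Finset (Fin m)} (hP : P.card = n)
    (hq : 0 < qr n - 1) :
    (qr n - 1) * H F hF P ≤ ∑ T : Finset (Fin m), Wm n P T * H F hF T := by
  rw [mul_comm, ← le_div_iff₀ hq]
  apply Finset.sup'_le
  intro f hf
  rw [le_div_iff₀ hq]
  have hswap : ∑ T : Finset (Fin m), Wm n P T * ((2/(m:ℝ)) * ∑ i, sgn T i * f i)
      = ((2/(m:ℝ)) * ∑ i, sgn P i * f i) * (qr n - 1) := by
    calc ∑ T : Finset (Fin m), Wm n P T * ((2/(m:ℝ)) * ∑ i, sgn T i * f i)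
        = (2/(m:ℝ)) * ∑ T : Finset (Fin m), ∑ i, Wm n P T * sgn T i * f i := by
          rw [Finset.mul_sum]
          apply Finset.sum_congr rfl
          intro T _
          have h1 : ∑ i, Wm n P T * sgn T i * f i
              = Wm n P T * ∑ i, sgn T i * f i := by
            rw [Finset.mul_sum]
            apply Finset.sum_congr rfl
            intro i _
            ring
          rw [h1]
          ring
      _ = (2/(m:ℝ)) * ∑ i, (∑ T : Finset (Fin m), Wm n P T * sgn T i) * f i := by
          rw [Finset.sum_comm]
          congr 1
          apply Finset.sum_congr rfl
          intro i _
          rw [Finset.sum_mul]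
      _ = (2/(m:ℝ)) * ∑ i, ((qr n - 1) * sgn P i) * f i := by
          congr 1
          apply Finset.sum_congr rfl
          intro i _
          rw [colsum hm hn hP i]
      _ = ((2/(m:ℝ)) * ∑ i, sgn P i * f i) * (qr n - 1) := by
          rw [Finset.sum_congr rfl (g := fun i => (qr n - 1) * (sgn P i * f i))
            (fun i _ => by ring), ← Finset.mul_sum]
          ring
  rw [← hswap]
  apply Finset.sum_le_sum
  intro T _
  apply mul_le_mul_of_nonneg_left _ (Wm_nonneg n P T)
  unfold H
  exact Finset.le_sup' (fun f => (2/(m:ℝ)) * ∑ i, sgn T i * f i) hf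

lemma sumIneq {m n : ℕ} (F : Finset (Fin m → ℝ)) (hF : F.Nonempty)
    (hm : m = 2*n) (hn : 1 ≤ n) (hq : 0 < qr n - 1) :
    (qr n - 1) * ∑ P ∈ (Finset.univ : Finset (Fin m)).powersetCard n, H F hF P
      ≤ ∑ T : Finset (Fin m), H F hF T := by
  rw [Finset.mul_sum]
  calc ∑ P ∈ (Finset.univ : Finset (Fin m)).powersetCard n, (qr n - 1) * H F hF P
      ≤ ∑ P ∈ (Finset.univ : Finset (Fin m)).powersetCard n,
          ∑ T : Finset (Fin m), Wm n P T * H F hF T := by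
        apply Finset.sum_le_sum
        intro P hP
        rw [Finset.mem_powersetCard] at hP
        exact keyIneq F hF hm hn hP.2 hq
    _ = ∑ T : Finset (Fin m),
          (∑ P ∈ (Finset.univ : Finset (Fin m)).powersetCard n, Wm n P T) * H F hF T := by
        rw [Finset.sum_comm]
        apply Finset.sum_congr rfl
        intro T _
        rw [Finset.sum_mul]
    _ = ∑ T : Finset (Fin m), H F hF T := by
        apply Finset.sum_congr rfl
        intro T _
        rw [rowsum hm T, one_mul]

def boolEquiv (m : ℕ) : Finset (Fin m) ≃ (Fin m → Bool) where
  toFun := fun T i => decide (i ∈ T)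
  invFun := fun ε => Finset.univ.filter (fun i => ε i = true)
  left_inv := fun T => by ext i; simp
  right_inv := fun ε => by funext i; simp

lemma rad_eq {m : ℕ} (F : Finset (Fin m → ℝ)) (hF : F.Nonempty) :
    Rad F hF = (∑ T : Finset (Fin m), H F hF T) / 2^m := by
  unfold Rad
  congr 1
  rw [← Equiv.sum_comp (boolEquiv m) (fun ε : Fin m → Bool =>
    F.sup' hF fun f => (2/(m:ℝ)) * ∑ i, bsgn (ε i) * f i)]
  apply Finset.sum_congr rfl
  intro T _
  unfold H
  congr 1
  funext f
  congr 1
  apply Finset.sum_congr rfl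
  intro i _
  congr 1
  have he : boolEquiv m T i = decide (i ∈ T) := rfl
  rw [he]
  by_cases h : i ∈ T <;> simp [bsgn, sgn, h]

lemma sgn_dot {m : ℕ} (X : Finset (Fin m)) (f : Fin m → ℝ) :
    ∑ i, sgn X i * f i = (∑ i ∈ X, f i) - ∑ i ∈ Xᶜ, f i := by
  have hsplit := Finset.sum_filter_add_sum_filter_not (Finset.univ : Finset (Fin m))
    (fun i => i ∈ X) (fun i => sgn X i * f i)
  have h1 : (Finset.univ : Finset (Fin m)).filter (fun i => i ∈ X) = X := by
    ext x; simp
  have h2 : (Finset.univ : Finset (Fin m)).filter (fun i => ¬ i ∈ X) = Xᶜ := by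
    ext x; simp
  rw [h1, h2] at hsplit
  rw [← hsplit]
  congr 1
  · apply Finset.sum_congr rfl
    intro i hi
    unfold sgn
    rw [if_pos hi, one_mul]
  · rw [← Finset.sum_neg_distrib]
    apply Finset.sum_congr rfl
    intro i hi
    unfold sgn
    rw [if_neg (Finset.mem_compl.mp hi)]
    ring

lemma prc_eq {m n : ℕ} (F : Finset (Fin m → ℝ)) (hF : F.Nonempty)
    (hm : m = 2*n) (hn : 1 ≤ n) :
    PRCu F hF n = (1/(((2*n).choose n : ℕ):ℝ)) *
      ∑ P ∈ (Finset.univ : Finset (Fin m)).powersetCard n, H F hF P := by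
  unfold PRCu
  rw [show m.choose n = (2*n).choose n from by rw [hm]]
  congr 1
  have hstep : ∀ S ∈ (Finset.univ : Finset (Fin m)).powersetCard n,
      (F.sup' hF fun f => favg f (Finset.univ \ S) - favg f S) = H F hF Sᶜ := by
    intro S hS
    rw [Finset.mem_powersetCard] at hS
    obtain ⟨-, hSc⟩ := hS
    have hcompl : (Finset.univ : Finset (Fin m)) \ S = Sᶜ :=
      (Finset.compl_eq_univ_sdiff S).symm
    have hcc : (Sᶜ).card = n := compl_card hm hSc
    unfold H
    congr 1
    funext f
    rw [hcompl]
    unfold favg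
    rw [sgn_dot, compl_compl, hcc, hSc]
    have hn0 : ((n:ℕ):ℝ) ≠ 0 := by
      exact_mod_cast (by omega : n ≠ 0)
    have hm0 : ((m:ℕ):ℝ) = 2*(n:ℝ) := by
      rw [hm]; push_cast; ring
    rw [hm0]
    field_simp
  rw [Finset.sum_congr rfl hstep]
  apply Finset.sum_nbij' (fun S => Sᶜ) (fun P => Pᶜ)
  · intro S hS
    rw [Finset.mem_powersetCard] at hS ⊢
    exact ⟨Finset.subset_univ _, compl_card hm hS.2⟩
  · intro P hP
    rw [Finset.mem_powersetCard] at hP ⊢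
    exact ⟨Finset.subset_univ _, compl_card hm hP.2⟩
  · intro S _
    rw [compl_compl]
  · intro P _
    rw [compl_compl]
  · intro S _
    rfl

lemma rad_nonneg {m : ℕ} (F : Finset (Fin m → ℝ)) (hF : F.Nonempty) :
    0 ≤ Rad F hF := by
  unfold Rad
  apply div_nonneg _ (by positivity)
  obtain ⟨f₀, hf₀⟩ := hF
  have hzero : ∀ i : Fin m, ∑ ε : Fin m → Bool, bsgn (ε i) = 0 := by
    intro i
    have hinv : Function.Involutive
        (fun ε : Fin m → Bool => Function.update ε i (!(ε i))) := by
      intro ε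
      funext j
      rcases eq_or_ne j i with rfl | hj
      · simp [Function.update_self]
      · simp [Function.update_of_ne hj]
    have hcomp := Equiv.sum_comp hinv.toPerm (fun ε : Fin m → Bool => bsgn (ε i))
    have h2 : ∀ ε : Fin m → Bool,
        bsgn ((Function.update ε i (!(ε i))) i) = - bsgn (ε i) := by
      intro ε
      rw [Function.update_self]
      cases h : ε i <;> simp [bsgn]
    have : ∑ ε : Fin m → Bool, bsgn (ε i) = - ∑ ε : Fin m → Bool, bsgn (ε i) := by
      conv_lhs => rw [← hcomp]
      rw [← Finset.sum_neg_distrib]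
      apply Finset.sum_congr rfl
      intro ε _
      show bsgn ((Function.update ε i (!(ε i))) i) = - bsgn (ε i)
      exact h2 ε
    linarith [this]
  have hlow : (0:ℝ) = ∑ ε : Fin m → Bool, (2/(m:ℝ)) * ∑ i, bsgn (ε i) * f₀ i := by
    rw [← Finset.mul_sum, Finset.sum_comm]
    have : ∀ i : Fin m, ∑ ε : Fin m → Bool, bsgn (ε i) * f₀ i = 0 := by
      intro i
      rw [← Finset.sum_mul, hzero, zero_mul]
    rw [Finset.sum_congr rfl (fun i _ => this i), Finset.sum_const_zero, mul_zero]
  rw [hlow]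
  apply Finset.sum_le_sum
  intro ε _
  exact Finset.le_sup' (fun f => (2/(m:ℝ)) * ∑ i, bsgn (ε i) * f i) hf₀

end PRCaux

open PRCaux in
/-- The PRC is bounded by the conditional Rademacher complexity up to the
multiplicative factor `1 + 2/(√(2πm) − 2)`. -/
theorem PRC_le_mul_Rad {m : ℕ} (hm : 2 ≤ m) (hme : Even m)
    (F : Finset (Fin m → ℝ)) (hF : F.Nonempty) :
    PRCu F hF (m / 2)
      ≤ (1 + 2 / (Real.sqrt (2 * Real.pi * m) - 2)) * Rad F hF := by
  obtain ⟨n, hn2⟩ := hme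
  have hmn : m = 2*n := by omega
  have hn : 1 ≤ n := by omega
  have hdiv : m / 2 = n := by omega
  rw [hdiv]
  have hCpos : (0:ℝ) < (((2*n).choose n : ℕ) : ℝ) := by
    exact_mod_cast Nat.choose_pos (show n ≤ 2*n by omega)
  set C : ℝ := (((2*n).choose n : ℕ) : ℝ) with hC
  set x : ℝ := Real.sqrt (Real.pi * n) with hx
  have hxC : C * x ≤ 4^n := CB_bound n
  have hx1 : 1 < x := by
    have h1n : (1:ℝ) ≤ (n:ℝ) := by exact_mod_cast hn
    have hsq : (1:ℝ) < Real.pi * n := by nlinarith [Real.pi_gt_three]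
    nlinarith [Real.sq_sqrt (by positivity : (0:ℝ) ≤ Real.pi * (n:ℝ)),
      Real.sqrt_nonneg (Real.pi * (n:ℝ))]
  have hxq : x ≤ qr n := by
    rw [show qr n = (4:ℝ)^n / C from rfl, le_div_iff₀ hCpos]
    calc x * C = C * x := by ring
      _ ≤ 4^n := hxC
  have hq1 : 0 < qr n - 1 := by linarith
  have hsum := sumIneq F hF hmn hn hq1
  have hradeq := rad_eq F hF
  have hprceq := prc_eq F hF hmn hn
  have hRpos := rad_nonneg F hF
  have h2m : ((2:ℝ))^m = 4^n := by
    rw [hmn, pow_mul]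
    norm_num
  have hTsum : ∑ T : Finset (Fin m), H F hF T = 4^n * Rad F hF := by
    rw [hradeq, ← h2m]
    field_simp
  rw [hTsum] at hsum
  -- √(2πm) = 2x
  have hsqrt : Real.sqrt (2 * Real.pi * m) = 2*x := by
    rw [show 2*Real.pi*(m:ℝ) = (2:ℝ)^2 * (Real.pi * n) from by
      rw [hmn]; push_cast; ring]
    rw [Real.sqrt_mul (by positivity), Real.sqrt_sq (by norm_num)]
  have hK : 1 + 2 / (Real.sqrt (2 * Real.pi * m) - 2) = x/(x-1) := by
    rw [hsqrt]
    have hx0 : x - 1 ≠ 0 := by linarith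
    have hx2 : 2*x - 2 ≠ 0 := by intro h; apply hx0; linarith
    field_simp
    ring
  rw [hprceq, hK]
  -- goal: (1/C) * A ≤ (x/(x-1)) * Rad
  set A : ℝ := ∑ P ∈ (Finset.univ : Finset (Fin m)).powersetCard n, H F hF P with hA
  set R : ℝ := Rad F hF with hR
  rw [one_div, inv_mul_eq_div, div_mul_eq_mul_div]
  rw [div_le_div_iff₀ hCpos (by linarith : (0:ℝ) < x - 1)]
  -- goal : A * (x-1) ≤ x * R * C
  have hqC : (qr n - 1) * C = 4^n - C := by
    rw [show qr n = (4:ℝ)^n / C from rfl]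
    field_simp
  have hAle : A ≤ 4^n * R / (qr n - 1) := by
    rw [le_div_iff₀ hq1]
    linarith [hsum]
  have hstep1 : A * (x-1) ≤ (4^n * R / (qr n - 1)) * (x-1) :=
    mul_le_mul_of_nonneg_right hAle (by linarith)
  have hstep2 : (4^n * R / (qr n - 1)) * (x-1) ≤ x * R * C := by
    rw [div_mul_eq_mul_div, div_le_iff₀ hq1]
    have hrhs : x * R * C * (qr n - 1) = x * R * (4^n - C) := by
      rw [mul_assoc, mul_comm C (qr n - 1), hqC]
    rw [hrhs]
    have hxCR : R * (C * x) ≤ R * 4^n := mul_le_mul_of_nonneg_left hxC hRpos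
    nlinarith [hxCR]
  linarith
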